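/- Let ε ∈ [0,1), let S ⊆ H with |S| > 1, and let T be any query tree whose leaves contain S. If a question q_i satisfies Δ_i(S, π_S)/c_i ≥ (1−ε) · max_j Δ_j(S, π_S)/c_j (an ε-approximately greedy choice), then Δ_i(S, π_S)/c_i ≥ (1−ε) · (1 − CP(π_S)) / C(T, π_S). -/
import Mathlib


open Finset

namespace ActiveLearning

variable {H A : Type*} {m : ℕ}

/-- The total mass of a weight function `v` on a finite set `S`. -/
def mass (v : H → ℝ) (S : Finset H) : ℝ := ∑ s ∈ S, v s

/-- `v` restricted to `S` and normalized. -/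
noncomputable def restrict [DecidableEq H] (v : H → ℝ) (S : Finset H) : H → ℝ :=
  fun h => if h ∈ S then v h / mass v S else 0

/-- The shrinkage `Δ` of a question `qi` on `(S, v)`. -/
noncomputable def shrink [Fintype A] [DecidableEq A] (qi : H → A)
    (S : Finset H) (v : H → ℝ) : ℝ :=
  mass v S - ∑ j : A, (mass v (S.filter fun s => qi s = j)) ^ 2 / mass v S

/-- The collision probability of a distribution `v`. -/
def CP [Fintype H] (v : H → ℝ) : ℝ := ∑ z : H, (v z) ^ 2

/-- Query trees: internal nodes are questions (indexed by `Fin m`), branches are answers,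
leaves are hypotheses. -/
inductive QTree (m : ℕ) (H A : Type*) : Type _
  | leaf : H → QTree m H A
  | node : Fin m → (A → QTree m H A) → QTree m H A

/-- Follow the answers of hypothesis `h` down the tree, returning the leaf reached. -/
def follow (q : Fin m → H → A) : QTree m H A → H → H
  | .leaf h', _ => h'
  | .node i ch, h => follow q (ch (q i h)) h

/-- The cost `c_T(h)`: sum of costs of the questions on the root-to-`h` path. -/
def pathCost (q : Fin m → H → A) (c : Fin m → ℝ) : QTree m H A → H → ℝ
  | .leaf _, _ => 0
  | .node i ch, h => c i + pathCost q c (ch (q i h)) h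

/-- The leaves of `T` include `S`: every `h ∈ S` is identified by `T`. -/
def ValidOn (q : Fin m → H → A) (T : QTree m H A) (S : Finset H) : Prop :=
  ∀ h ∈ S, follow q T h = h

/-- The expected cost `C(T, v)` of a query tree `T` under weights `v`. -/
noncomputable def treeCost [Fintype H] (q : Fin m → H → A) (c : Fin m → ℝ)
    (T : QTree m H A) (v : H → ℝ) : ℝ :=
  ∑ h : H, v h * pathCost q c T h

/-- The questions asked along the root-to-`h` path. -/
def pathQs (q : Fin m → H → A) : QTree m H A → H → List (Fin m)
  | .leaf _, _ => []
  | .node i ch, h => i :: pathQs q (ch (q i h)) h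

/-- `T` is a greedy query tree for `π` on version space `S`: at every node it asks a question
maximizing the shrinkage-cost ratio and recurses on each nonempty answer class. -/
inductive IsGreedy [Fintype A] [DecidableEq A] [DecidableEq H]
    (q : Fin m → H → A) (c : Fin m → ℝ) (π : H → ℝ) :
    QTree m H A → Finset H → Prop
  | leaf (h : H) : IsGreedy q c π (.leaf h) {h}
  | node (S : Finset H) (i : Fin m) (ch : A → QTree m H A)
      (hcard : 1 < S.card)
      (hmax : ∀ j : Fin m,
        shrink (q j) S (restrict π S) / c j ≤ shrink (q i) S (restrict π S) / c i)
      (hch : ∀ a : A, (S.filter fun s => q i s = a).Nonempty →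
        IsGreedy q c π (ch a) (S.filter fun s => q i s = a)) :
      IsGreedy q c π (.node i ch) S

/-- `T` is an `ε`-approximate greedy query tree for `π` on version space `S`. -/
inductive IsApproxGreedy [Fintype A] [DecidableEq A] [DecidableEq H]
    (ε : ℝ) (q : Fin m → H → A) (c : Fin m → ℝ) (π : H → ℝ) :
    QTree m H A → Finset H → Prop
  | leaf (h : H) : IsApproxGreedy ε q c π (.leaf h) {h}
  | node (S : Finset H) (i : Fin m) (ch : A → QTree m H A)
      (hcard : 1 < S.card)
      (happrox : ∀ j : Fin m,
        (1 - ε) * (shrink (q j) S (restrict π S) / c j) ≤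
          shrink (q i) S (restrict π S) / c i)
      (hch : ∀ a : A, (S.filter fun s => q i s = a).Nonempty →
        IsApproxGreedy ε q c π (ch a) (S.filter fun s => q i s = a)) :
      IsApproxGreedy ε q c π (.node i ch) S

/-- `T` is irreducible on version space `S`: every asked question strictly splits the
surviving set. -/
inductive Irreducible [DecidableEq A] (q : Fin m → H → A) :
    QTree m H A → Finset H → Prop
  | leaf (h : H) (S : Finset H) : Irreducible q (.leaf h) S
  | node (S : Finset H) (i : Fin m) (ch : A → QTree m H A)
      (hsplit : ∃ s ∈ S, ∃ t ∈ S, q i s ≠ q i t)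
      (hch : ∀ a : A, (S.filter fun s => q i s = a).Nonempty →
        Irreducible q (ch a) (S.filter fun s => q i s = a)) :
      Irreducible q (.node i ch) S


lemma le_of_sq_le_sq'' {a b : ℝ} (h : a^2 ≤ b^2) (hb : 0 ≤ b) : a ≤ b := by
  nlinarith [sq_nonneg (a - b), sq_nonneg (a + b)]

/-- Key inequality: for `0 ≤ f ≤ g` with `∑ g = 1`,
`(∑f)² - ∑f² ≤ (∑f)·(1 - ∑g²)`. -/
lemma key_ineq {A : Type*} [Fintype A] (f g : A → ℝ)
    (hf : ∀ a, 0 ≤ f a) (hfg : ∀ a, f a ≤ g a) (hg1 : ∑ a, g a = 1) :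
    (∑ a, f a)^2 - ∑ a, (f a)^2 ≤ (∑ a, f a) * (1 - ∑ a, (g a)^2) := by
  set r := ∑ a, f a with hr
  set Aq := ∑ a, (f a)^2 with hAq
  have hd : ∀ a, 0 ≤ g a - f a := fun a => sub_nonneg.2 (hfg a)
  set s := ∑ a, (g a - f a) with hs
  set Bq := ∑ a, (g a - f a)^2 with hBq
  set Cq := ∑ a, f a * (g a - f a) with hCq
  have hrs : r + s = 1 := by
    rw [hr, hs, ← Finset.sum_add_distrib]
    simpa using hg1
  have hr0 : 0 ≤ r := Finset.sum_nonneg fun a _ => hf a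
  have hs0 : 0 ≤ s := Finset.sum_nonneg fun a _ => hd a
  have hA0 : 0 ≤ Aq := Finset.sum_nonneg fun a _ => sq_nonneg _
  have hC0 : 0 ≤ Cq := Finset.sum_nonneg fun a _ => mul_nonneg (hf a) (hd a)
  have hA : Aq ≤ r^2 := Finset.sum_sq_le_sq_sum_of_nonneg (fun a _ => hf a)
  have hB : Bq ≤ s^2 := Finset.sum_sq_le_sq_sum_of_nonneg (fun a _ => hd a)
  have hCS : Cq^2 ≤ Aq * Bq := Finset.sum_mul_sq_le_sq_mul_sq _ _ _
  have hgsum : ∑ a, (g a)^2 = Aq + 2*Cq + Bq := by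
    have e1 : ∀ a : A, (g a)^2 = f a^2 + 2*(f a*(g a - f a)) + (g a - f a)^2 :=
      fun a => by ring
    rw [Finset.sum_congr rfl (fun a _ => e1 a), Finset.sum_add_distrib,
      Finset.sum_add_distrib, ← Finset.mul_sum, hAq, hCq, hBq]
  rw [hgsum]
  have h1 : Cq^2 ≤ Aq * s^2 := by nlinarith [hA0]
  have h2 : (2*r*Cq)^2 ≤ (s*(r^2+Aq))^2 := by
    nlinarith [sq_nonneg (s*(r^2-Aq)), mul_nonneg (mul_nonneg hr0 hr0) (sub_nonneg.2 h1)]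
  have h3 : 2*r*Cq ≤ s*(r^2+Aq) :=
    le_of_sq_le_sq'' h2 (mul_nonneg hs0 (by positivity))
  have h4 : r*Bq ≤ r*s^2 := mul_le_mul_of_nonneg_left hB hr0
  have hs1 : s = 1 - r := by linarith
  rw [hs1] at h3 h4
  nlinarith [h3, h4]

lemma shrink_eq_one_sub [Fintype A] [DecidableEq A] [DecidableEq H]
    (qj : H → A) (S : Finset H) (v : H → ℝ) (hm : mass v S = 1) :
    shrink qj S v = 1 - ∑ a : A, (mass v (S.filter fun s => qj s = a))^2 := by
  simp [shrink, hm]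

lemma mass_fiberwise [Fintype A] [DecidableEq A] [DecidableEq H]
    (qj : H → A) (S : Finset H) (v : H → ℝ) :
    ∑ a : A, mass v (S.filter fun s => qj s = a) = mass v S := by
  simpa [mass] using Finset.sum_fiberwise S qj v

lemma mass_nonneg' {v : H → ℝ} (hv : ∀ h, 0 ≤ v h) (S : Finset H) : 0 ≤ mass v S :=
  Finset.sum_nonneg fun h _ => hv h

lemma mass_mono {v : H → ℝ} (hv : ∀ h, 0 ≤ v h) {S S' : Finset H} (h : S ⊆ S') :
    mass v S ≤ mass v S' :=
  Finset.sum_le_sum_of_subset_of_nonneg h (fun h _ _ => hv h)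

lemma shrink_nonneg [Fintype A] [DecidableEq A] [DecidableEq H]
    (qj : H → A) (S : Finset H) (v : H → ℝ) (hv : ∀ h, 0 ≤ v h)
    (hm : mass v S = 1) : 0 ≤ shrink qj S v := by
  rw [shrink_eq_one_sub qj S v hm]
  have h1 : ∑ a : A, (mass v (S.filter fun s => qj s = a))^2
      ≤ (∑ a : A, mass v (S.filter fun s => qj s = a))^2 :=
    Finset.sum_sq_le_sq_sum_of_nonneg (fun a _ => mass_nonneg' hv _)
  rw [mass_fiberwise, hm] at h1
  linarith

lemma pathCost_nonneg (q : Fin m → H → A) (c : Fin m → ℝ) (hc : ∀ i, 0 ≤ c i)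
    (T : QTree m H A) (h : H) : 0 ≤ pathCost q c T h := by
  induction T with
  | leaf h0 => simp [pathCost]
  | node j ch IH =>
    have := IH (q j h)
    simp only [pathCost]
    linarith [hc j]

/-- Main induction: for any subtree valid on `S' ⊆ S`,
`κ·((mass S')² - ∑_{S'} v²) ≤ ρ · ∑_{S'} v·pathCost`. -/
lemma tree_bound [Fintype A] [DecidableEq A] [DecidableEq H]
    (q : Fin m → H → A) (c : Fin m → ℝ) (v : H → ℝ) (hv : ∀ h, 0 ≤ v h)
    (S : Finset H) (hmassS : mass v S = 1)
    (κ ρ : ℝ) (hκ : 0 ≤ κ)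
    (hb : ∀ j : Fin m, κ * shrink (q j) S v ≤ ρ * c j)
    (T : QTree m H A) :
    ∀ S' : Finset H, S' ⊆ S → ValidOn q T S' →
      κ * ((mass v S')^2 - ∑ h ∈ S', (v h)^2) ≤
        ρ * ∑ h ∈ S', v h * pathCost q c T h := by
  induction T with
  | leaf h0 =>
    intro S' hsub hval
    have hsing : S' ⊆ {h0} := by
      intro h hh
      have h1 := hval h hh
      simp only [follow] at h1
      simp [h1.symm]
    have h2 : (mass v S')^2 - ∑ h ∈ S', (v h)^2 = 0 := by
      rcases Finset.subset_singleton_iff.mp hsing with rfl | rfl <;> simp [mass]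
    have h3 : ∑ h ∈ S', v h * pathCost q c (.leaf h0) h = 0 := by
      simp [pathCost]
    rw [h2, h3, mul_zero, mul_zero]
  | node j ch IH =>
    intro S' hsub hval
    set F : A → Finset H := fun a => S'.filter (fun s => q j s = a) with hF
    set P : A → Finset H := fun a => S.filter (fun s => q j s = a) with hP
    have hFsubS' : ∀ a, F a ⊆ S' := fun a => Finset.filter_subset _ _
    have hFP : ∀ a, F a ⊆ P a := fun a => Finset.filter_subset_filter _ hsub
    -- validity on fibers
    have hvalF : ∀ a, ValidOn q (ch a) (F a) := by
      intro a h hh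
      have hq : q j h = a := (Finset.mem_filter.mp hh).2
      have h1 := hval h (hFsubS' a hh)
      simp only [follow] at h1
      rwa [hq] at h1
    -- key per-node inequality
    have hsumF : ∑ a : A, mass v (F a) = mass v S' := mass_fiberwise (q j) S' v
    have hsumP : ∑ a : A, mass v (P a) = 1 := by
      rw [mass_fiberwise (q j) S v, hmassS]
    have hkey : (mass v S')^2 - ∑ a : A, (mass v (F a))^2 ≤
        (mass v S') * (1 - ∑ a : A, (mass v (P a))^2) := by
      have := key_ineq (fun a => mass v (F a)) (fun a => mass v (P a))
        (fun a => mass_nonneg' hv _) (fun a => mass_mono hv (hFP a)) hsumP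
      rwa [hsumF] at this
    have hshr : shrink (q j) S v = 1 - ∑ a : A, (mass v (P a))^2 :=
      shrink_eq_one_sub (q j) S v hmassS
    have hm0 : 0 ≤ mass v S' := mass_nonneg' hv _
    have h6 : κ * ((mass v S')^2 - ∑ a : A, (mass v (F a))^2) ≤ ρ * c j * mass v S' := by
      have e1 : κ * ((mass v S')^2 - ∑ a : A, (mass v (F a))^2) ≤
          κ * ((mass v S') * shrink (q j) S v) := by
        rw [hshr]
        exact mul_le_mul_of_nonneg_left hkey hκ
      have e2 : (mass v S') * (κ * shrink (q j) S v) ≤ (mass v S') * (ρ * c j) :=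
        mul_le_mul_of_nonneg_left (hb j) hm0
      nlinarith [e1, e2]
    -- decompose sums over fibers
    have hvsq : ∑ h ∈ S', (v h)^2 = ∑ a : A, ∑ h ∈ F a, (v h)^2 :=
      (Finset.sum_fiberwise S' (fun s => q j s) (fun h => (v h)^2)).symm
    have hrhs : ∑ h ∈ S', v h * pathCost q c (.node j ch) h =
        c j * mass v S' + ∑ a : A, ∑ h ∈ F a, v h * pathCost q c (ch a) h := by
      have e1 : ∑ h ∈ S', v h * pathCost q c (.node j ch) h =
          ∑ h ∈ S', (v h * c j + v h * pathCost q c (ch (q j h)) h) := by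
        refine Finset.sum_congr rfl fun h _ => ?_
        simp only [pathCost]; ring
      rw [e1, Finset.sum_add_distrib]
      congr 1
      · rw [mass, Finset.mul_sum]
        exact Finset.sum_congr rfl fun h _ => mul_comm _ _
      · rw [← Finset.sum_fiberwise S' (fun s => q j s)
          (fun h => v h * pathCost q c (ch (q j h)) h)]
        refine Finset.sum_congr rfl fun a _ => Finset.sum_congr rfl fun h hh => ?_
        rw [(Finset.mem_filter.mp hh).2]
    -- IH summed
    have hIH : ∑ a : A, (κ * ((mass v (F a))^2 - ∑ h ∈ F a, (v h)^2)) ≤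
        ∑ a : A, (ρ * ∑ h ∈ F a, v h * pathCost q c (ch a) h) :=
      Finset.sum_le_sum fun a _ => IH a (F a) ((hFsubS' a).trans hsub) (hvalF a)
    have hIH' : κ * (∑ a : A, (mass v (F a))^2) - κ * (∑ h ∈ S', (v h)^2) ≤
        ρ * ∑ a : A, ∑ h ∈ F a, v h * pathCost q c (ch a) h := by
      rw [hvsq]
      calc κ * (∑ a : A, (mass v (F a))^2) - κ * (∑ a : A, ∑ h ∈ F a, (v h)^2)
          = ∑ a : A, (κ * ((mass v (F a))^2 - ∑ h ∈ F a, (v h)^2)) := by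
            rw [Finset.sum_congr rfl (fun a _ => mul_sub κ _ _), Finset.sum_sub_distrib,
              ← Finset.mul_sum, ← Finset.mul_sum]
        _ ≤ ∑ a : A, (ρ * ∑ h ∈ F a, v h * pathCost q c (ch a) h) := hIH
        _ = ρ * ∑ a : A, ∑ h ∈ F a, v h * pathCost q c (ch a) h := by
            rw [Finset.mul_sum]
    rw [hrhs]
    nlinarith [h6, hIH']


/-- If `ε ∈ [0,1)`, `|S| > 1`, `T` is any query tree whose leaves contain
`S`, and `q_i` is an `ε`-approximately greedy choice, i.e.
`Δ_i(S, π_S)/c_i ≥ (1−ε)·Δ_j(S, π_S)/c_j` for all `j`, then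
`Δ_i(S, π_S)/c_i ≥ (1−ε)·(1 − CP(π_S)) / C(T, π_S)`. -/
theorem approx_greedy_shrink_bound [Fintype H] [Fintype A] [DecidableEq H] [DecidableEq A]
    (π : H → ℝ) (hπpos : ∀ h, 0 < π h) (hπsum : ∑ h : H, π h = 1)
    (hH : 1 < Fintype.card H)
    (q : Fin m → H → A) (c : Fin m → ℝ) (hc : ∀ i, 0 < c i)
    (ε : ℝ) (hε0 : 0 ≤ ε) (hε1 : ε < 1)
    (S : Finset H) (hS : 1 < S.card)
    (T : QTree m H A) (hT : ValidOn q T S)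
    (i : Fin m)
    (hi : ∀ j : Fin m,
      (1 - ε) * (shrink (q j) S (restrict π S) / c j) ≤
        shrink (q i) S (restrict π S) / c i) :
    (1 - ε) * (1 - CP (restrict π S)) / treeCost q c T (restrict π S) ≤
      shrink (q i) S (restrict π S) / c i := by
  have hSne : S.Nonempty := Finset.card_pos.mp (by omega)
  have hMpos : 0 < mass π S :=
    Finset.sum_pos (fun h _ => hπpos h) hSne
  set v := restrict π S with hvdef
  have hv0 : ∀ h, 0 ≤ v h := by
    intro h
    by_cases hh : h ∈ S <;>
      simp [hvdef, restrict, hh, le_div_iff₀ hMpos, (hπpos h).le,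
        div_nonneg (hπpos h).le hMpos.le]
  have hvS : ∀ h ∉ S, v h = 0 := by
    intro h hh; simp [hvdef, restrict, hh]
  have hm1 : mass v S = 1 := by
    rw [mass]
    have : ∀ h ∈ S, v h = π h / mass π S := by
      intro h hh; simp [hvdef, restrict, hh]
    rw [Finset.sum_congr rfl this, ← Finset.sum_div]
    exact div_self (ne_of_gt hMpos)
  set ρ := shrink (q i) S v / c i with hρdef
  have hρ0 : 0 ≤ ρ := div_nonneg (shrink_nonneg _ _ _ hv0 hm1) (hc i).le
  have hb : ∀ j : Fin m, (1 - ε) * shrink (q j) S v ≤ ρ * c j := by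
    intro j
    have h1 := hi j
    rw [← mul_div_assoc] at h1
    exact (div_le_iff₀ (hc j)).mp h1
  have hmain := tree_bound q c v hv0 S hm1 (1 - ε) ρ (by linarith) hb T S
    (subset_refl S) hT
  rw [hm1, one_pow] at hmain
  have hCP : ∑ h ∈ S, (v h)^2 = CP v := by
    rw [CP]
    exact Finset.sum_subset (Finset.subset_univ S)
      (fun h _ hh => by rw [hvS h hh]; ring)
  have htc : ∑ h ∈ S, v h * pathCost q c T h = treeCost q c T v := by
    rw [treeCost]
    exact Finset.sum_subset (Finset.subset_univ S)
      (fun h _ hh => by rw [hvS h hh]; ring)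
  rw [hCP, htc] at hmain
  have htc0 : 0 ≤ treeCost q c T v := by
    rw [treeCost]
    exact Finset.sum_nonneg fun h _ =>
      mul_nonneg (hv0 h) (pathCost_nonneg q c (fun i => (hc i).le) T h)
  rcases eq_or_lt_of_le htc0 with heq | hpos
  · rw [← heq, div_zero]
    exact hρ0
  · rw [div_le_iff₀ hpos]
    linarith [hmain]

end ActiveLearning
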